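/- If g ∈ O(H) for a real Hilbert space H, and g = exp(X) for some X ∈ 𝔬(H), then ker(g + 1) admits an orthogonal complex structure; in particular, if ker(g + 1) is finite-dimensional of odd dimension, then g is not in the image of the exponential map of O(H). -/

import Mathlib

open NormedSpace RealInnerProductSpace

set_option maxHeartbeats 2000000 in
/-- If `g ∈ O(H)` (real Hilbert space) satisfies `g = exp X` with `X` skew-symmetric,
then `ker(g + 1)` carries an orthogonal complex structure; in particular, if
`ker(g + 1)` is finite-dimensional, its dimension is not odd. -/
theorem stmt_17 {H : Type*} [NormedAddCommGroup H] [InnerProductSpace ℝ H]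
    [CompleteSpace H]
    (g : H →L[ℝ] H) (hg : g ∈ unitary (H →L[ℝ] H))
    (X : H →L[ℝ] H) (hX : star X = -X) (hexp : g = NormedSpace.exp X) :
    (∃ J : (LinearMap.ker ((g + 1 : H →L[ℝ] H) : H →ₗ[ℝ] H)) ≃ₗᵢ[ℝ] (LinearMap.ker ((g + 1 : H →L[ℝ] H) : H →ₗ[ℝ] H)),
        ∀ v, J (J v) = -v) ∧
    (FiniteDimensional ℝ (LinearMap.ker ((g + 1 : H →L[ℝ] H) : H →ₗ[ℝ] H)) →
      ¬ Odd (Module.finrank ℝ (LinearMap.ker ((g + 1 : H →L[ℝ] H) : H →ₗ[ℝ] H)))) := by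
  let +nondep : NormedAlgebra ℚ (H →L[ℝ] H) := .restrictScalars ℚ ℝ (H →L[ℝ] H)
  set a : H →L[ℝ] H := (1/2 : ℝ) • X with ha
  have haa : a + a = X := by
    rw [ha, ← add_smul]; norm_num
  have hEmul : exp a * exp a = g := by
    rw [← exp_add_of_commute (Commute.refl a), haa, hexp]
  have hEneg : exp a * exp (-a) = 1 := by
    rw [← exp_add_of_commute (Commute.neg_right (Commute.refl a)), add_neg_cancel, exp_zero]
  have hnegE : exp (-a) * exp a = 1 := by
    rw [← exp_add_of_commute (Commute.neg_left (Commute.refl a)), neg_add_cancel, exp_zero]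
  have hstar : star (exp a) = exp (-a) := by
    rw [star_exp]
    congr 1
    rw [ha, star_smul, hX, star_trivial, smul_neg]
  -- commutation of g with exp a and exp (-a)
  have hcomm1 : g * exp a = exp a * g := by
    rw [← hEmul, mul_assoc]
  have hcommE : exp (-a) * exp a = exp a * exp (-a) := by rw [hEneg, hnegE]
  have hcomm2 : g * exp (-a) = exp (-a) * g := by
    rw [← hEmul]
    calc exp a * exp a * exp (-a) = exp a * (exp a * exp (-a)) := by rw [mul_assoc]
    _ = exp a * (exp (-a) * exp a) := by rw [hcommE]
    _ = exp (-a) * (exp a * exp a) := by rw [← mul_assoc, ← hcommE, mul_assoc]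
  set K := LinearMap.ker ((g + 1 : H →L[ℝ] H) : H →ₗ[ℝ] H) with hK
  have hmemgen : ∀ (T : H →L[ℝ] H), g * T = T * g → ∀ v : H, v ∈ K → T v ∈ K := by
    intro T hT v hv
    have hv' : g v + v = 0 := by
      have := hv
      rw [hK, LinearMap.mem_ker] at this
      simpa using this
    rw [hK, LinearMap.mem_ker]
    have : g (T v) = T (g v) := by
      have := congrArg (fun S : H →L[ℝ] H => S v) hT
      simpa using this
    simp only [ContinuousLinearMap.coe_coe, ContinuousLinearMap.add_apply, ContinuousLinearMap.one_apply]
    rw [this, ← map_add]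
    rw [hv']
    simp
  have hmem : ∀ v : H, v ∈ K → exp a v ∈ K := hmemgen _ hcomm1
  have hmem' : ∀ v : H, v ∈ K → exp (-a) v ∈ K := hmemgen _ hcomm2
  -- norm preservation
  have hnorm : ∀ v : H, ‖exp a v‖ = ‖v‖ := by
    intro v
    have hadj : ContinuousLinearMap.adjoint (exp a) = exp (-a) := by
      rw [← ContinuousLinearMap.star_eq_adjoint, hstar]
    have h1 : (inner ℝ (exp a v) (exp a v) : ℝ) = inner ℝ v v := by
      rw [← ContinuousLinearMap.adjoint_inner_left, hadj]
      have : exp (-a) (exp a v) = v := by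
        have := congrArg (fun S : H →L[ℝ] H => S v) hnegE
        simpa using this
      rw [this]
    have h2 : ‖exp a v‖ ^ 2 = ‖v‖ ^ 2 := by
      rw [← real_inner_self_eq_norm_sq, ← real_inner_self_eq_norm_sq, h1]
    nlinarith [norm_nonneg (exp a v), norm_nonneg v]
  have hleft : ∀ v : H, exp (-a) (exp a v) = v := by
    intro v
    have := congrArg (fun S : H →L[ℝ] H => S v) hnegE
    simpa using this
  have hright : ∀ v : H, exp a (exp (-a) v) = v := by
    intro v
    have := congrArg (fun S : H →L[ℝ] H => S v) hEneg
    simpa using this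
  let Jle : K ≃ₗ[ℝ] K :=
    { toFun := fun v => ⟨exp a v, hmem v v.2⟩
      map_add' := fun u v => Subtype.ext (map_add _ _ _)
      map_smul' := fun c v => Subtype.ext (map_smul _ _ _)
      invFun := fun v => ⟨exp (-a) v, hmem' v v.2⟩
      left_inv := fun v => Subtype.ext (hleft v)
      right_inv := fun v => Subtype.ext (hright v) }
  let J : K ≃ₗᵢ[ℝ] K := ⟨Jle, fun v => hnorm v⟩
  have hJJ : ∀ v : K, J (J v) = -v := by
    intro v
    apply Subtype.ext
    show exp a (exp a (v : H)) = -(v : H)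
    have h1 : exp a (exp a (v : H)) = g (v : H) := by
      have := congrArg (fun S : H →L[ℝ] H => S (v : H)) hEmul
      simpa using this
    have hv : g (v : H) + (v : H) = 0 := by
      have hv0 : ((g + 1 : H →L[ℝ] H)) (v : H) = 0 := v.2
      rw [ContinuousLinearMap.add_apply, ContinuousLinearMap.one_apply] at hv0
      exact hv0
    rw [h1, eq_neg_of_add_eq_zero_left hv]
  refine ⟨⟨J, hJJ⟩, ?_⟩
  intro hfd hodd
  let f : K →ₗ[ℝ] K := J.toLinearEquiv.toLinearMap
  have hff : f ∘ₗ f = (-1 : ℝ) • LinearMap.id := by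
    apply LinearMap.ext
    intro v
    simp only [LinearMap.comp_apply, LinearMap.smul_apply, LinearMap.id_apply, neg_one_smul]
    exact hJJ v
  have hdet : LinearMap.det f * LinearMap.det f = (-1 : ℝ) ^ (Module.finrank ℝ K) := by
    rw [← LinearMap.det_comp, hff, LinearMap.det_smul, LinearMap.det_id, mul_one]
  rw [Odd.neg_one_pow hodd] at hdet
  nlinarith [mul_self_nonneg (LinearMap.det f)]
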